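/- Under the setup of the empirical weight estimator (i.i.d. samples in [m,M], finite 𝒳×𝒴), the quantity Δ_w = (1/2) E[|ŵ(X,Y) − w(X,Y)|] satisfies Δ_w ≤ (M−m)·|𝒳|·|𝒴|·√π / (2√(2·min_{x,y} N(x,y))), obtained by integrating the Hoeffding tail bound: E[|ŵ−w|] ≤ 2|𝒳||𝒴| ∫₀^∞ exp(−2ε²N/(M−m)²) dε = (M−m)|𝒳||𝒴|√π / √(2N) with N = min N(x,y). -/

import Mathlib

open MeasureTheory ProbabilityTheory Finset

/-- Jensen/Cauchy-Schwarz: on a probability measure, `E|Z| ≤ √(E Z²)`. -/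
lemma my_abs_integral_le_sqrt {Ω : Type*} [MeasurableSpace Ω] (μ : Measure Ω)
    [IsProbabilityMeasure μ] {Z : Ω → ℝ} (hZ : MemLp Z 2 μ) :
    ∫ ω, |Z ω| ∂μ ≤ Real.sqrt (∫ ω, (Z ω) ^ 2 ∂μ) := by
  have h2 : Integrable (fun ω => (Z ω) ^ 2) μ := hZ.integrable_sq
  have h1 : Integrable (fun ω => |Z ω|) μ := (hZ.integrable one_le_two).abs
  set I := ∫ ω, |Z ω| ∂μ with hI
  have hInn : 0 ≤ I := integral_nonneg fun ω => abs_nonneg _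
  have key : 0 ≤ ∫ ω, (|Z ω| - I) ^ 2 ∂μ := integral_nonneg fun ω => sq_nonneg _
  have expand : ∫ ω, (|Z ω| - I) ^ 2 ∂μ = ∫ ω, (Z ω) ^ 2 ∂μ - I ^ 2 := by
    have : ∀ ω, (|Z ω| - I) ^ 2 = (Z ω) ^ 2 - 2 * I * |Z ω| + I ^ 2 := by
      intro ω; rw [← sq_abs (Z ω)]; ring
    simp_rw [this]
    have e1 : Integrable (fun ω => Z ω ^ 2 - 2 * I * |Z ω|) μ := by
      exact h2.sub (h1.const_mul (2 * I))
    have e2 : Integrable (fun ω => 2 * I * |Z ω|) μ := h1.const_mul (2 * I)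
    rw [integral_add e1 (integrable_const _), integral_sub h2 e2, MeasureTheory.integral_const_mul]
    simp [← hI]; ring
  have hle : I ^ 2 ≤ ∫ ω, (Z ω) ^ 2 ∂μ := by linarith [expand ▸ key]
  calc I = Real.sqrt (I ^ 2) := (Real.sqrt_sq hInn).symm
    _ ≤ _ := Real.sqrt_le_sqrt hle

/-- For the empirical weight estimator (for each `(x,y)` in a finite set `𝒳 × 𝒴`,
`ŵ(x,y)` is the mean of `N(x,y)` i.i.d. samples bounded in `[m,M]` with mean `w(x,y)`),
and any random pair `(X,Y)` independent of the samples, the quantity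
`Δ_w = (1/2) E[|ŵ(X,Y) - w(X,Y)|]` satisfies
`Δ_w ≤ (M-m)·|𝒳|·|𝒴|·√π / (2·√(2·N_min))` where `N_min = min_{x,y} N(x,y)`. -/
theorem stmt_7 {Ω 𝒳 𝒴 : Type*} [MeasurableSpace Ω] [Fintype 𝒳] [Fintype 𝒴]
    [MeasurableSpace 𝒳] [MeasurableSpace 𝒴]
    (μ : Measure Ω) [IsProbabilityMeasure μ]
    (m M : ℝ) (hmM : m ≤ M)
    (N : 𝒳 → 𝒴 → ℕ) (Nmin : ℕ) (hNmin : 0 < Nmin) (hNle : ∀ x y, Nmin ≤ N x y)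
    (W : (x : 𝒳) → (y : 𝒴) → Fin (N x y) → Ω → ℝ)
    (hWmeas : ∀ x y i, Measurable (W x y i))
    (hbdd : ∀ x y i ω, W x y i ω ∈ Set.Icc m M)
    (w : 𝒳 → 𝒴 → ℝ) (hmean : ∀ x y i, ∫ ω, W x y i ω ∂μ = w x y)
    (hindep : ∀ x y, iIndepFun (W x y) μ)
    (XY : Ω → 𝒳 × 𝒴) (hXY : Measurable XY)
    (hXYindep : IndepFun XY (fun ω => fun x y (i : Fin (N x y)) => W x y i ω) μ)
    (what : 𝒳 → 𝒴 → Ω → ℝ)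
    (hwhat : ∀ x y ω, what x y ω = (1 / (N x y : ℝ)) * ∑ i : Fin (N x y), W x y i ω) :
    (1 / 2) * ∫ ω, |what (XY ω).1 (XY ω).2 ω - w (XY ω).1 (XY ω).2| ∂μ ≤
      (M - m) * (Fintype.card 𝒳 : ℝ) * (Fintype.card 𝒴 : ℝ) * Real.sqrt Real.pi /
        (2 * Real.sqrt (2 * (Nmin : ℝ))) := by
  -- basic facts
  have hW2 : ∀ x y i, MemLp (W x y i) 2 μ := fun x y i =>
    memLp_of_bounded (ae_of_all _ (fun ω => hbdd x y i ω)) (hWmeas x y i).aestronglyMeasurable 2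
  have hNpos : ∀ x y, (0 : ℝ) < (N x y : ℝ) := fun x y => by
    exact_mod_cast lt_of_lt_of_le hNmin (hNle x y)
  -- MemLp of what
  have hwhatLp : ∀ x y, MemLp (what x y) 2 μ := by
    intro x y
    have : what x y = fun ω => (1 / (N x y : ℝ)) * (∑ i : Fin (N x y), W x y i) ω := by
      funext ω; rw [hwhat, Finset.sum_apply]
    rw [this]
    exact (memLp_finset_sum' _ fun i _ => hW2 x y i).const_mul _
  -- mean of what
  have hwhatMean : ∀ x y, ∫ ω, what x y ω ∂μ = w x y := by
    intro x y
    simp_rw [hwhat]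
    rw [MeasureTheory.integral_const_mul,
      integral_finset_sum _ fun i _ => (hW2 x y i).integrable one_le_two]
    simp_rw [hmean]
    simp [Finset.sum_const]
    exact inv_mul_cancel_left₀ (ne_of_gt (hNpos x y)) _
  -- variance bound
  have hvar : ∀ x y, variance (what x y) μ ≤ ((M - m) / 2) ^ 2 / (Nmin : ℝ) := by
    intro x y
    have heq : what x y = fun ω => (1 / (N x y : ℝ)) * (∑ i : Fin (N x y), W x y i) ω := by
      funext ω; rw [hwhat, Finset.sum_apply]
    have hsum : variance (∑ i : Fin (N x y), W x y i) μ
        = ∑ i : Fin (N x y), variance (W x y i) μ :=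
      IndepFun.variance_sum (fun i _ => hW2 x y i)
        (fun i _ j _ hij => (hindep x y).indepFun hij)
    have hvb : ∀ i : Fin (N x y), variance (W x y i) μ ≤ ((M - m) / 2) ^ 2 := fun i =>
      variance_le_sq_of_bounded (ae_of_all _ (fun ω => hbdd x y i ω))
        (hWmeas x y i).aemeasurable
    calc variance (what x y) μ
        = (1 / (N x y : ℝ)) ^ 2 * ∑ i : Fin (N x y), variance (W x y i) μ := by
          rw [heq, variance_const_mul, hsum]
      _ ≤ (1 / (N x y : ℝ)) ^ 2 * ((N x y : ℝ) * ((M - m) / 2) ^ 2) := by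
          apply mul_le_mul_of_nonneg_left _ (sq_nonneg _)
          calc ∑ i : Fin (N x y), variance (W x y i) μ
              ≤ ∑ _i : Fin (N x y), ((M - m) / 2) ^ 2 := Finset.sum_le_sum fun i _ => hvb i
            _ = (N x y : ℝ) * ((M - m) / 2) ^ 2 := by simp [Finset.sum_const, mul_comm]
      _ = ((M - m) / 2) ^ 2 / (N x y : ℝ) := by
          field_simp [ne_of_gt (hNpos x y)]
      _ ≤ ((M - m) / 2) ^ 2 / (Nmin : ℝ) := by
          apply div_le_div_of_nonneg_left (sq_nonneg _) (by exact_mod_cast hNmin)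
          exact_mod_cast hNle x y
  -- per-pair expected deviation
  have key : ∀ x y, ∫ ω, |what x y ω - w x y| ∂μ ≤ (M - m) / (2 * Real.sqrt (Nmin : ℝ)) := by
    intro x y
    have hZ : MemLp (fun ω => what x y ω - w x y) 2 μ := (hwhatLp x y).sub (memLp_const _)
    calc ∫ ω, |what x y ω - w x y| ∂μ
        ≤ Real.sqrt (∫ ω, (what x y ω - w x y) ^ 2 ∂μ) := my_abs_integral_le_sqrt μ hZ
      _ = Real.sqrt (variance (what x y) μ) := by
          rw [variance_eq_integral (hwhatLp x y).aemeasurable, hwhatMean]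
      _ ≤ Real.sqrt (((M - m) / 2) ^ 2 / (Nmin : ℝ)) := Real.sqrt_le_sqrt (hvar x y)
      _ = (M - m) / (2 * Real.sqrt (Nmin : ℝ)) := by
          rw [Real.sqrt_div (sq_nonneg _), Real.sqrt_sq (by linarith)]
          rw [div_div]
  -- integrability of the dominating sum
  have hint : ∀ x y, Integrable (fun ω => |what x y ω - w x y|) μ := fun x y =>
    (((hwhatLp x y).sub (memLp_const _)).integrable one_le_two).abs
  have hgint : Integrable (fun ω => ∑ x : 𝒳, ∑ y : 𝒴, |what x y ω - w x y|) μ :=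
    integrable_finset_sum _ fun x _ => integrable_finset_sum _ fun y _ => hint x y
  -- pointwise domination
  have hdom : ∀ ω, |what (XY ω).1 (XY ω).2 ω - w (XY ω).1 (XY ω).2|
      ≤ ∑ x : 𝒳, ∑ y : 𝒴, |what x y ω - w x y| := by
    intro ω
    calc |what (XY ω).1 (XY ω).2 ω - w (XY ω).1 (XY ω).2|
        ≤ ∑ y : 𝒴, |what (XY ω).1 y ω - w (XY ω).1 y| :=
          Finset.single_le_sum (f := fun y => |what (XY ω).1 y ω - w (XY ω).1 y|)
            (fun y _ => abs_nonneg _) (Finset.mem_univ _)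
      _ ≤ ∑ x : 𝒳, ∑ y : 𝒴, |what x y ω - w x y| :=
          Finset.single_le_sum (f := fun x => ∑ y : 𝒴, |what x y ω - w x y|)
            (fun x _ => Finset.sum_nonneg fun y _ => abs_nonneg _) (Finset.mem_univ _)
  -- main integral bound
  have hmain : ∫ ω, |what (XY ω).1 (XY ω).2 ω - w (XY ω).1 (XY ω).2| ∂μ
      ≤ (Fintype.card 𝒳 : ℝ) * (Fintype.card 𝒴 : ℝ) * ((M - m) / (2 * Real.sqrt (Nmin : ℝ))) := by
    calc ∫ ω, |what (XY ω).1 (XY ω).2 ω - w (XY ω).1 (XY ω).2| ∂μ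
        ≤ ∫ ω, ∑ x : 𝒳, ∑ y : 𝒴, |what x y ω - w x y| ∂μ :=
          integral_mono_of_nonneg (ae_of_all _ fun ω => abs_nonneg _) hgint
            (ae_of_all _ hdom)
      _ = ∑ x : 𝒳, ∑ y : 𝒴, ∫ ω, |what x y ω - w x y| ∂μ := by
          rw [integral_finset_sum _ fun x _ => integrable_finset_sum _ fun y _ => hint x y]
          exact Finset.sum_congr rfl fun x _ => integral_finset_sum _ fun y _ => hint x y
      _ ≤ ∑ _x : 𝒳, ∑ _y : 𝒴, (M - m) / (2 * Real.sqrt (Nmin : ℝ)) :=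
          Finset.sum_le_sum fun x _ => Finset.sum_le_sum fun y _ => key x y
      _ = (Fintype.card 𝒳 : ℝ) * (Fintype.card 𝒴 : ℝ) * ((M - m) / (2 * Real.sqrt (Nmin : ℝ))) := by
          simp [Finset.sum_const, mul_assoc]
  -- final arithmetic
  have hsN : (0 : ℝ) < Real.sqrt (Nmin : ℝ) := Real.sqrt_pos.2 (by exact_mod_cast hNmin)
  have hs2N : Real.sqrt (2 * (Nmin : ℝ)) = Real.sqrt 2 * Real.sqrt (Nmin : ℝ) :=
    Real.sqrt_mul (by norm_num) _
  have hpi : Real.sqrt 2 ≤ 2 * Real.sqrt Real.pi := by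
    have : (2 : ℝ) * Real.sqrt Real.pi = Real.sqrt (4 * Real.pi) := by
      rw [Real.sqrt_mul (by norm_num), show Real.sqrt 4 = 2 by
        rw [show (4:ℝ) = 2^2 by norm_num, Real.sqrt_sq (by norm_num)]]
    rw [this]
    exact Real.sqrt_le_sqrt (by nlinarith [Real.pi_gt_three])
  have hcard : (0 : ℝ) ≤ (Fintype.card 𝒳 : ℝ) * (Fintype.card 𝒴 : ℝ) := by positivity
  have hfinal : (1 / 2) * ((Fintype.card 𝒳 : ℝ) * (Fintype.card 𝒴 : ℝ) *
      ((M - m) / (2 * Real.sqrt (Nmin : ℝ)))) ≤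
      (M - m) * (Fintype.card 𝒳 : ℝ) * (Fintype.card 𝒴 : ℝ) * Real.sqrt Real.pi /
        (2 * Real.sqrt (2 * (Nmin : ℝ))) := by
    rw [hs2N]
    have h1 : 0 ≤ (M - m) * ((Fintype.card 𝒳 : ℝ) * (Fintype.card 𝒴 : ℝ)) := by
      apply mul_nonneg (by linarith) hcard
    calc (1 / 2) * ((Fintype.card 𝒳 : ℝ) * (Fintype.card 𝒴 : ℝ) *
          ((M - m) / (2 * Real.sqrt (Nmin : ℝ))))
        = ((M - m) * ((Fintype.card 𝒳 : ℝ) * (Fintype.card 𝒴 : ℝ))) /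
          (4 * Real.sqrt (Nmin : ℝ)) := by ring
      _ ≤ (M - m) * (Fintype.card 𝒳 : ℝ) * (Fintype.card 𝒴 : ℝ) * Real.sqrt Real.pi /
          (2 * (Real.sqrt 2 * Real.sqrt (Nmin : ℝ))) := by
          rw [div_le_div_iff₀ (by positivity) (by positivity)]
          nlinarith [mul_le_mul_of_nonneg_left hpi (mul_nonneg h1 hsN.le),
            Real.sqrt_nonneg Real.pi, Real.sqrt_nonneg 2, hsN.le]
  calc (1 / 2) * ∫ ω, |what (XY ω).1 (XY ω).2 ω - w (XY ω).1 (XY ω).2| ∂μ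
      ≤ (1 / 2) * ((Fintype.card 𝒳 : ℝ) * (Fintype.card 𝒴 : ℝ) *
        ((M - m) / (2 * Real.sqrt (Nmin : ℝ)))) := by
        apply mul_le_mul_of_nonneg_left hmain (by norm_num)
    _ ≤ _ := hfinal
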